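/- Let m > 0, t_f > 0, I0 ∈ (0,1), and let x* ∈ (0, t_f) satisfy I(t_f − x*)·(m − x*) = 1. Then x* is the unique global minimizer on [0, t_f] of the emblematic disutility E(x̄) = 1 − (1 − x̄/m)·(1 − I(t_f − x̄))/(1 − I0): for all y ∈ [0, t_f], E(x*) ≤ E(y), with strict inequality for y ≠ x*. That is, the interior Nash equilibrium of the delay-strategy game coincides with the socially optimal delay strategy, so the game exhibits no free-riding. -/
import Mathlib


/-- Prevalence function `I(u) = I0 / (I0 + (1 - I0) exp(-u))`. -/
noncomputable def Ifun (I0 u : ℝ) : ℝ := I0 / (I0 + (1 - I0) * Real.exp (-u))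

/-- Emblematic disutility `E(x̄) = 1 - (1 - x̄/m)(1 - I(t_f - x̄))/(1 - I0)`. -/
noncomputable def Embl (m tf I0 xb : ℝ) : ℝ :=
  1 - (1 - xb / m) * (1 - Ifun I0 (tf - xb)) / (1 - I0)

/-- The interior Nash equilibrium `x*` of the delay-strategy game is the unique global
minimizer on `[0, t_f]` of the emblematic disutility: no free-riding. -/
theorem stmt6 (m tf I0 xstar : ℝ) (hm : 0 < m) (htf : 0 < tf)
    (hI0 : I0 ∈ Set.Ioo (0:ℝ) 1) (hx : xstar ∈ Set.Ioo 0 tf)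
    (heq : Ifun I0 (tf - xstar) * (m - xstar) = 1) :
    ∀ y ∈ Set.Icc (0:ℝ) tf,
      Embl m tf I0 xstar ≤ Embl m tf I0 y ∧
      (y ≠ xstar → Embl m tf I0 xstar < Embl m tf I0 y) := by
  obtain ⟨hI0p, hI0l⟩ := hI0
  obtain ⟨hx0, hxtf⟩ := hx
  have h1I0 : 0 < 1 - I0 := by linarith
  set Es := Real.exp (-(tf - xstar)) with hEsdef
  have hEsp : 0 < Es := Real.exp_pos _
  have hds : 0 < I0 + (1 - I0) * Es := by nlinarith
  -- From the Nash condition: I0 * (m - xstar) = I0 + (1 - I0) * Es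
  have hkey : I0 * (m - xstar) = I0 + (1 - I0) * Es := by
    have h := heq
    unfold Ifun at h
    rw [div_mul_eq_mul_div, div_eq_one_iff_eq (ne_of_gt hds)] at h
    linarith [h]
  have hmx : 1 < m - xstar := by nlinarith
  -- closed form of Embl
  have formE : ∀ z : ℝ, Embl m tf I0 z =
      1 - (m - z) * Real.exp (-(tf - z)) /
        (m * (I0 + (1 - I0) * Real.exp (-(tf - z)))) := by
    intro z
    have hEz : 0 < Real.exp (-(tf - z)) := Real.exp_pos _
    have hdz : (0:ℝ) < I0 + (1 - I0) * Real.exp (-(tf - z)) := by nlinarith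
    unfold Embl Ifun
    field_simp
    ring
  -- main strict inequality
  have main : ∀ y : ℝ, y ≠ xstar → Embl m tf I0 xstar < Embl m tf I0 y := by
    intro y hy
    set Ey := Real.exp (-(tf - y)) with hEydef
    have hEyp : 0 < Ey := Real.exp_pos _
    have hdy : 0 < I0 + (1 - I0) * Ey := by nlinarith
    -- core: e^t > 1 + t for t = xstar - y ≠ 0
    have ht : xstar - y ≠ 0 := sub_ne_zero.mpr (Ne.symm hy)
    have hexp := Real.add_one_lt_exp ht
    have hEE : Ey * Real.exp (xstar - y) = Es := by
      rw [← Real.exp_add]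
      congr 1
      ring
    have h1 : I0 * Ey * ((xstar - y) + 1) < I0 * Es := by
      calc I0 * Ey * ((xstar - y) + 1) < I0 * Ey * Real.exp (xstar - y) := by
            apply mul_lt_mul_of_pos_left hexp (by positivity)
        _ = I0 * Es := by rw [mul_assoc, hEE]
    have h2 : (1 - I0) * Ey * Es = I0 * (m - xstar - 1) * Ey := by
      have : (1 - I0) * Es = I0 * (m - xstar - 1) := by linarith [hkey]
      nlinarith [this]
    have hK : I0 * (m - y) * Ey < (I0 + (1 - I0) * Ey) * Es := by
      nlinarith [h1, h2]
    rw [formE y, formE xstar]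
    have hfrac : (m - y) * Ey / (m * (I0 + (1 - I0) * Ey)) <
        (m - xstar) * Es / (m * (I0 + (1 - I0) * Es)) := by
      rw [div_lt_div_iff₀ (by positivity) (by positivity), ← hkey]
      nlinarith [mul_lt_mul_of_pos_left hK (by nlinarith : (0:ℝ) < m * (m - xstar))]
    linarith [hfrac]
  intro y hy
  rcases eq_or_ne y xstar with h | h
  · subst h
    exact ⟨le_refl _, fun hc => absurd rfl hc⟩
  · exact ⟨le_of_lt (main y h), fun _ => main y h⟩
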